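/- For all κ, κ̂, M, c with 0 < κ < 1, κ̂ > 0, M > 0, c > 0, there exists a constant C = C(κ, κ̂, M, c) > 0 with the following property. Let X be a real Hilbert space, g : X → X twice continuously Fréchet differentiable with ‖g′(y; u)‖ ≤ κ‖u‖ and ‖g″(y; u, v)‖ ≤ κ̂‖u‖‖v‖ for all y, u, v, and a κ-contraction. Let (x_k) be any sequence generated by Anderson acceleration of depth m = 2 with damping factors 0 < β_k ≤ 1 (i.e., at each step k the coefficients (α^k_{k−3}, α^k_{k−2}, α^k_{k−1}) minimize ‖Σ_{j=k−3}^{k−1} α_j w_{j+1}‖ subject to Σ α_j = 1, and x_k = (1−β_{k−1}) Σ_j α^k_j x_j + β_{k−1} Σ_j α^k_j g(x_j)), with residuals w_n := g(x_{n−1}) − x_{n−1} all nonzero and consecutive residual differences nonzero. If at step k the optimization coefficients at levels k and k+1 are all bounded in absolute value by M, and |α^k_{k−1}| ≥ c, |α^{k+1}_k| ≥ c, and |1 − α^k_{k−3}| ≥ c, then ‖w_{k+1}‖ ≤ θ_k ( (1 − β_{k−1}) + κ β_{k−1} ) ‖w_k‖ + C ( ‖w_k‖² + ‖w_{k−1}‖²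 + ‖w_{k−2}‖² ), where θ_k := ‖Σ_{j=k−3}^{k−1} α^k_j w_{j+1}‖ / ‖w_k‖ is the stage-k optimization gain. -/

import Mathlib

lemma aux_lip {X : Type} [NormedAddCommGroup X] [NormedSpace ℝ X]
    (g : X → X) (κh : ℝ) (hκh : 0 ≤ κh) (hg : ContDiff ℝ 2 g)
    (hg2 : ∀ y u v : X, ‖fderiv ℝ (fderiv ℝ g) y u v‖ ≤ κh * ‖u‖ * ‖v‖)
    (a b : X) : ‖fderiv ℝ g b - fderiv ℝ g a‖ ≤ κh * ‖b - a‖ := by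
  have hdiff : Differentiable ℝ (fderiv ℝ g) :=
    (hg.fderiv_right (m := 1) (by norm_num)).differentiable (by norm_num)
  have hbd : ∀ z : X, ‖fderiv ℝ (fderiv ℝ g) z‖ ≤ κh := by
    intro z
    refine ContinuousLinearMap.opNorm_le_bound _ hκh (fun u => ?_)
    refine ContinuousLinearMap.opNorm_le_bound _ (by positivity) (fun v => hg2 z u v)
  exact Convex.norm_image_sub_le_of_norm_fderiv_le (fun z _ => hdiff z)
    (fun z _ => hbd z) convex_univ (Set.mem_univ a) (Set.mem_univ b)

lemma aux_taylor {X : Type} [NormedAddCommGroup X] [NormedSpace ℝ X]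
    (g : X → X) (κh : ℝ) (hκh : 0 ≤ κh) (hg : ContDiff ℝ 2 g)
    (hg2 : ∀ y u v : X, ‖fderiv ℝ (fderiv ℝ g) y u v‖ ≤ κh * ‖u‖ * ‖v‖)
    (x y : X) : ‖g y - g x - fderiv ℝ g x (y - x)‖ ≤ κh * ‖y - x‖ ^ 2 := by
  have hgd : Differentiable ℝ g := hg.differentiable (by norm_num)
  set L := fderiv ℝ g x with hL
  have key : ‖(g y - L y) - (g x - L x)‖ ≤ (κh * ‖y - x‖) * ‖y - x‖ := by
    refine Convex.norm_image_sub_le_of_norm_fderiv_le (f := fun z => g z - L z)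
      (s := segment ℝ x y) (fun z _ => (hgd z).sub (L.differentiable z))
      (fun z hz => ?_) (convex_segment x y) (left_mem_segment ℝ x y) (right_mem_segment ℝ x y)
    have hder : fderiv ℝ (fun z => g z - L z) z = fderiv ℝ g z - L := by
      rw [fderiv_fun_sub (hgd z) (L.differentiable z), L.fderiv]
    rw [hder]
    have hzx : ‖z - x‖ ≤ ‖y - x‖ := by
      obtain ⟨a, b, ha, hb, hab, rfl⟩ := hz
      have : a • x + b • y - x = b • (y - x) := by
        rw [smul_sub]; rw [show a = 1 - b by linarith]; module
      rw [this, norm_smul, Real.norm_eq_abs, abs_of_nonneg hb]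
      nlinarith [norm_nonneg (y - x)]
    calc ‖fderiv ℝ g z - L‖ ≤ κh * ‖z - x‖ := aux_lip g κh hκh hg hg2 x z
      _ ≤ κh * ‖y - x‖ := by nlinarith
  have : (g y - L y) - (g x - L x) = g y - g x - L (y - x) := by
    rw [map_sub]; abel
  rw [this] at key
  calc ‖g y - g x - L (y - x)‖ ≤ (κh * ‖y - x‖) * ‖y - x‖ := key
    _ = κh * ‖y - x‖ ^ 2 := by ring

lemma aux_sq6 (a b c : ℝ) : (a + 2*b + c) ^ 2 ≤ 6 * (a^2 + b^2 + c^2) := by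
  nlinarith [sq_nonneg (2*a - b), sq_nonneg (2*c - b), sq_nonneg (a - c)]

set_option maxHeartbeats 1000000 in
/-- Theorem (convergence of the residual with depth `m = 2`).
For all `κ, κ̂, M, c` with `0 < κ < 1`, `κ̂, M, c > 0` there is a constant `C > 0` such
that for any Anderson(2)-generated sequence (for a `C²`, contractive `g` with
`‖g'‖ ≤ κ`, `‖g''‖ ≤ κ̂`) whose optimization coefficients at levels `k` and `k+1` are
bounded by `M`, with `|α^k_{k-1}|, |α^{k+1}_k|, |1 - α^k_{k-3}| ≥ c`,
`‖w_{k+1}‖ ≤ θ_k ((1-β_{k-1}) + κ β_{k-1}) ‖w_k‖ + C (‖w_k‖² + ‖w_{k-1}‖² + ‖w_{k-2}‖²)`. -/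
theorem stmt_18 (κ κh M c : ℝ) (hκ0 : 0 < κ) (hκ1 : κ < 1)
    (hκh : 0 < κh) (hM : 0 < M) (hc : 0 < c) :
    ∃ C : ℝ, 0 < C ∧
      ∀ (X : Type) [NormedAddCommGroup X] [InnerProductSpace ℝ X] [CompleteSpace X],
      ∀ g : X → X,
        ContDiff ℝ 2 g →
        (∀ y u : X, ‖fderiv ℝ g y u‖ ≤ κ * ‖u‖) →
        (∀ y u v : X, ‖fderiv ℝ (fderiv ℝ g) y u v‖ ≤ κh * ‖u‖ * ‖v‖) →
        (∀ x y : X, ‖g y - g x‖ ≤ κ * ‖x - y‖) →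
        ∀ (x w : ℤ → X) (α : ℤ → ℤ → ℝ) (β : ℤ → ℝ),
        (∀ n, w n = g (x (n - 1)) - x (n - 1)) →
        (∀ i, 0 < β i ∧ β i ≤ 1) →
        (∀ i, ∑ j ∈ Finset.Icc (i - 3) (i - 1), α i j = 1) →
        (∀ (i : ℤ) (b : ℤ → ℝ), ∑ j ∈ Finset.Icc (i - 3) (i - 1), b j = 1 →
          ‖∑ j ∈ Finset.Icc (i - 3) (i - 1), α i j • w (j + 1)‖ ≤
            ‖∑ j ∈ Finset.Icc (i - 3) (i - 1), b j • w (j + 1)‖) →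
        (∀ i, x i = (1 - β (i - 1)) • ∑ j ∈ Finset.Icc (i - 3) (i - 1), α i j • x j +
          β (i - 1) • ∑ j ∈ Finset.Icc (i - 3) (i - 1), α i j • g (x j)) →
        (∀ n, w n ≠ 0) →
        (∀ n, w n ≠ w (n - 1)) →
        ∀ k : ℤ,
        (∀ j ∈ Finset.Icc (k - 3) (k - 1), |α k j| ≤ M) →
        (∀ j ∈ Finset.Icc (k - 2) k, |α (k + 1) j| ≤ M) →
        c ≤ |α k (k - 1)| →
        c ≤ |α (k + 1) k| →
        c ≤ |1 - α k (k - 3)| →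
        ‖w (k + 1)‖ ≤
          (‖∑ j ∈ Finset.Icc (k - 3) (k - 1), α k j • w (j + 1)‖ / ‖w k‖) *
            ((1 - β (k - 1)) + κ * β (k - 1)) * ‖w k‖ +
          C * (‖w k‖ ^ 2 + ‖w (k - 1)‖ ^ 2 + ‖w (k - 2)‖ ^ 2) := by
  have h1κ : (0:ℝ) < 1 - κ := by linarith
  refine ⟨κh + 162 * M ^ 3 * κh / (1 - κ) ^ 2, by positivity, ?_⟩
  intro X _ _ _ g hg hg1 hg2 hcon x w α β hw hβ hα hopt hx hwne _hwne' k hM1 _hM2 _hc1 _hc2 _hc3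
  -- expand the three-element Icc sums
  have hIcc : Finset.Icc (k-3) (k-1) = ({k-3, k-2, k-1} : Finset ℤ) := by
    ext j; simp only [Finset.mem_Icc, Finset.mem_insert, Finset.mem_singleton]; omega
  have hS : ∀ (A : Type) [inst : AddCommMonoid A], ∀ f : ℤ → A,
      ∑ j ∈ Finset.Icc (k-3) (k-1), f j = f (k-3) + f (k-2) + f (k-1) := by
    intro A inst f
    rw [hIcc, Finset.sum_insert (by simp only [Finset.mem_insert, Finset.mem_singleton]; omega),
      Finset.sum_insert (by simp only [Finset.mem_singleton]; omega), Finset.sum_singleton,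
      add_assoc]
  set a₀ := α k (k-3) with ha₀
  set a₁ := α k (k-2) with ha₁
  set a₂ := α k (k-1) with ha₂
  set b := β (k-1) with hbdef
  obtain ⟨hb0, hb1⟩ := hβ (k-1)
  rw [← hbdef] at hb0 hb1
  have hsum : a₀ + a₁ + a₂ = 1 := by have := hα k; rwa [hS ℝ] at this
  set xbar := a₀ • x (k-3) + a₁ • x (k-2) + a₂ • x (k-1) with hxbardef
  set r := a₀ • w (k-2) + a₁ • w (k-1) + a₂ • w k with hrb
  have hi1 : (k - 3 + 1 : ℤ) = k - 2 := by ring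
  have hi2 : (k - 2 + 1 : ℤ) = k - 1 := by ring
  have hi3 : (k - 1 + 1 : ℤ) = k := by ring
  have hgoalsum : ∑ j ∈ Finset.Icc (k-3) (k-1), α k j • w (j+1) = r := by
    rw [hS X (fun j => α k j • w (j+1)), hi1, hi2, hi3]
  have hgx : ∀ j : ℤ, g (x j) = x j + w (j+1) := by
    intro j
    have := hw (j+1)
    rw [show (j+1-1 : ℤ) = j by ring] at this
    rw [this]; abel
  have hg0 : g (x (k-3)) = x (k-3) + w (k-2) := by rw [hgx (k-3), hi1]
  have hg1' : g (x (k-2)) = x (k-2) + w (k-1) := by rw [hgx (k-2), hi2]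
  have hg2' : g (x (k-1)) = x (k-1) + w k := by rw [hgx (k-1), hi3]
  have hxk : x k = xbar + b • r := by
    have hx' := hx k
    rw [hS X (fun j => α k j • x j), hS X (fun j => α k j • g (x j)),
      hg0, hg1', hg2'] at hx'
    rw [hx', hxbardef, hrb]; module
  have hw1 : w (k+1) = g (x k) - x k := by
    have := hw (k+1); rwa [show (k+1-1 : ℤ) = k by ring] at this
  set L := fderiv ℝ g xbar with hLdef
  -- decomposition
  set T3 := g (x k) - g xbar - L (b • r) with hT3def
  set T4 := g xbar - (xbar + r) with hT4def
  have hdecomp : w (k+1) = (1-b) • r + L (b • r) + T3 + T4 := by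
    rw [hT3def, hT4def, hw1, hxk]; module
  -- bound on T3
  have hxkdiff : x k - xbar = b • r := by rw [hxk]; abel
  have hT3 : ‖T3‖ ≤ κh * ‖b • r‖ ^ 2 := by
    have := aux_taylor g κh hκh.le hg hg2 xbar (x k)
    rwa [hxkdiff, ← hLdef, ← hT3def] at this
  -- bound on T4
  have hmap : a₀ • L (x (k-3) - xbar) + a₁ • L (x (k-2) - xbar) + a₂ • L (x (k-1) - xbar) = 0 := by
    rw [← map_smul, ← map_smul, ← map_smul, ← map_add, ← map_add]
    have hz : a₀ • (x (k-3) - xbar) + a₁ • (x (k-2) - xbar) + a₂ • (x (k-1) - xbar)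
        = (a₀ • x (k-3) + a₁ • x (k-2) + a₂ • x (k-1)) - (a₀ + a₁ + a₂) • xbar := by module
    rw [hz, hsum, one_smul, hxbardef, sub_self, map_zero]
  have hsumg : a₀ • g (x (k-3)) + a₁ • g (x (k-2)) + a₂ • g (x (k-1)) = xbar + r := by
    rw [hg0, hg1', hg2', hxbardef, hrb]; module
  have hT4eq : T4 = -(a₀ • (g (x (k-3)) - g xbar - L (x (k-3) - xbar))
      + a₁ • (g (x (k-2)) - g xbar - L (x (k-2) - xbar))
      + a₂ • (g (x (k-1)) - g xbar - L (x (k-1) - xbar))) := by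
    have step : a₀ • (g (x (k-3)) - g xbar - L (x (k-3) - xbar))
        + a₁ • (g (x (k-2)) - g xbar - L (x (k-2) - xbar))
        + a₂ • (g (x (k-1)) - g xbar - L (x (k-1) - xbar))
        = (a₀ • g (x (k-3)) + a₁ • g (x (k-2)) + a₂ • g (x (k-1)))
          - (a₀ + a₁ + a₂) • g xbar
          - (a₀ • L (x (k-3) - xbar) + a₁ • L (x (k-2) - xbar) + a₂ • L (x (k-1) - xbar)) := by
      module
    rw [hT4def, step, hmap, hsum, hsumg, one_smul]; abel
  -- coefficient bounds
  have hmem0 : (k-3) ∈ Finset.Icc (k-3) (k-1) := by simp only [Finset.mem_Icc]; omega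
  have hmem1 : (k-2) ∈ Finset.Icc (k-3) (k-1) := by simp only [Finset.mem_Icc]; omega
  have hmem2 : (k-1) ∈ Finset.Icc (k-3) (k-1) := by simp only [Finset.mem_Icc]; omega
  have ha₀M : |a₀| ≤ M := hM1 (k-3) hmem0
  have ha₁M : |a₁| ≤ M := hM1 (k-2) hmem1
  have ha₂M : |a₂| ≤ M := hM1 (k-1) hmem2
  -- optimality : ‖r‖ ≤ ‖w k‖
  have hropt : ‖r‖ ≤ ‖w k‖ := by
    have h := hopt k (fun j => if j = k-1 then (1:ℝ) else 0) ?_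
    · rw [hgoalsum] at h
      rw [hS X (fun j => (if j = k-1 then (1:ℝ) else 0) • w (j+1))] at h
      rw [if_neg (by omega), if_neg (by omega), if_pos rfl, zero_smul, zero_smul,
        one_smul, zero_add, zero_add, hi3] at h
      exact h
    · rw [hS ℝ (fun j => if j = k-1 then (1:ℝ) else 0),
        if_neg (by omega), if_neg (by omega), if_pos rfl]
      norm_num
  -- distances between consecutive iterates
  have hdist : ∀ i : ℤ, ‖x i - x (i-1)‖ ≤ (‖w (i+1)‖ + ‖w i‖) / (1 - κ) := by
    intro i
    have hwi1 : w (i+1) = g (x i) - x i := by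
      have := hw (i+1); rwa [show (i+1-1 : ℤ) = i by ring] at this
    have hwi : w i = g (x (i-1)) - x (i-1) := hw i
    have hid : x i - x (i-1) = (g (x i) - g (x (i-1))) - (w (i+1) - w i) := by
      rw [hwi1, hwi]; abel
    have hlip := hcon (x (i-1)) (x i)
    rw [norm_sub_rev (x (i-1))] at hlip
    have htri : ‖x i - x (i-1)‖ ≤ ‖g (x i) - g (x (i-1))‖ + ‖w (i+1) - w i‖ := by
      rw [hid]; exact norm_sub_le _ _
    have htri2 : ‖w (i+1) - w i‖ ≤ ‖w (i+1)‖ + ‖w i‖ := norm_sub_le _ _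
    rw [le_div_iff₀ h1κ]
    nlinarith [norm_nonneg (x i - x (i-1))]
  have hd1 : ‖x (k-1) - x (k-2)‖ ≤ (‖w k‖ + ‖w (k-1)‖) / (1 - κ) := by
    have := hdist (k-1)
    rwa [show (k-1-1 : ℤ) = k-2 by ring, hi3] at this
  have hd2 : ‖x (k-2) - x (k-3)‖ ≤ (‖w (k-1)‖ + ‖w (k-2)‖) / (1 - κ) := by
    have := hdist (k-2)
    rwa [show (k-2-1 : ℤ) = k-3 by ring, hi2] at this
  set D := ‖x (k-1) - x (k-2)‖ + ‖x (k-2) - x (k-3)‖ with hDdef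
  have hD0 : 0 ≤ D := by positivity
  -- pairwise distances ≤ D
  have hp12 : ‖x (k-1) - x (k-2)‖ ≤ D := by
    rw [hDdef]; nlinarith [norm_nonneg (x (k-2) - x (k-3))]
  have hp23 : ‖x (k-2) - x (k-3)‖ ≤ D := by
    rw [hDdef]; nlinarith [norm_nonneg (x (k-1) - x (k-2))]
  have hp13 : ‖x (k-1) - x (k-3)‖ ≤ D := by
    calc ‖x (k-1) - x (k-3)‖ = ‖(x (k-1) - x (k-2)) + (x (k-2) - x (k-3))‖ := by abel_nf
      _ ≤ ‖x (k-1) - x (k-2)‖ + ‖x (k-2) - x (k-3)‖ := norm_add_le _ _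
      _ = D := rfl
  -- distances to xbar
  have hxbar : ∀ j : ℤ, ‖x j - x (k-3)‖ ≤ D → ‖x j - x (k-2)‖ ≤ D → ‖x j - x (k-1)‖ ≤ D →
      ‖x j - xbar‖ ≤ 3 * M * D := by
    intro j h0 h1 h2
    have hid : x j - xbar = a₀ • (x j - x (k-3)) + a₁ • (x j - x (k-2)) + a₂ • (x j - x (k-1))
        + (1 - (a₀ + a₁ + a₂)) • x j := by
      rw [hxbardef]; module
    rw [hid, hsum, sub_self, zero_smul, add_zero]
    calc ‖a₀ • (x j - x (k-3)) + a₁ • (x j - x (k-2)) + a₂ • (x j - x (k-1))‖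
        ≤ ‖a₀ • (x j - x (k-3))‖ + ‖a₁ • (x j - x (k-2))‖ + ‖a₂ • (x j - x (k-1))‖ :=
          norm_add₃_le
      _ = |a₀| * ‖x j - x (k-3)‖ + |a₁| * ‖x j - x (k-2)‖ + |a₂| * ‖x j - x (k-1)‖ := by
          rw [norm_smul, norm_smul, norm_smul, Real.norm_eq_abs, Real.norm_eq_abs,
            Real.norm_eq_abs]
      _ ≤ 3 * M * D := by
          nlinarith [abs_nonneg a₀, abs_nonneg a₁, abs_nonneg a₂, norm_nonneg (x j - x (k-3)),
            norm_nonneg (x j - x (k-2)), norm_nonneg (x j - x (k-1))]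
  have hq0 : ‖x (k-3) - xbar‖ ≤ 3 * M * D := by
    refine hxbar (k-3) (by simpa using hD0) ?_ ?_
    · rw [norm_sub_rev]; exact hp23
    · rw [norm_sub_rev]; exact hp13
  have hq1 : ‖x (k-2) - xbar‖ ≤ 3 * M * D := by
    refine hxbar (k-2) hp23 (by simpa using hD0) ?_
    · rw [norm_sub_rev]; exact hp12
  have hq2 : ‖x (k-1) - xbar‖ ≤ 3 * M * D := by
    refine hxbar (k-1) hp13 hp12 (by simpa using hD0)
  -- Taylor bounds for e_j
  have he0 := aux_taylor g κh hκh.le hg hg2 xbar (x (k-3))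
  have he1 := aux_taylor g κh hκh.le hg hg2 xbar (x (k-2))
  have he2 := aux_taylor g κh hκh.le hg hg2 xbar (x (k-1))
  rw [← hLdef] at he0 he1 he2
  have hT4 : ‖T4‖ ≤ 27 * M ^ 3 * κh * D ^ 2 := by
    rw [hT4eq, norm_neg]
    have h3MD : 0 ≤ 3 * M * D := by positivity
    calc ‖a₀ • (g (x (k-3)) - g xbar - L (x (k-3) - xbar))
        + a₁ • (g (x (k-2)) - g xbar - L (x (k-2) - xbar))
        + a₂ • (g (x (k-1)) - g xbar - L (x (k-1) - xbar))‖
        ≤ ‖a₀ • (g (x (k-3)) - g xbar - L (x (k-3) - xbar))‖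
          + ‖a₁ • (g (x (k-2)) - g xbar - L (x (k-2) - xbar))‖
          + ‖a₂ • (g (x (k-1)) - g xbar - L (x (k-1) - xbar))‖ := norm_add₃_le
      _ = |a₀| * ‖g (x (k-3)) - g xbar - L (x (k-3) - xbar)‖
          + |a₁| * ‖g (x (k-2)) - g xbar - L (x (k-2) - xbar)‖
          + |a₂| * ‖g (x (k-1)) - g xbar - L (x (k-1) - xbar)‖ := by
          rw [norm_smul, norm_smul, norm_smul, Real.norm_eq_abs, Real.norm_eq_abs,
            Real.norm_eq_abs]
      _ ≤ M * (κh * (3*M*D) ^ 2) + M * (κh * (3*M*D) ^ 2) + M * (κh * (3*M*D) ^ 2) := by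
          have k0 : ‖x (k-3) - xbar‖ ^ 2 ≤ (3*M*D) ^ 2 :=
            pow_le_pow_left₀ (norm_nonneg _) hq0 2
          have k1 : ‖x (k-2) - xbar‖ ^ 2 ≤ (3*M*D) ^ 2 :=
            pow_le_pow_left₀ (norm_nonneg _) hq1 2
          have k2 : ‖x (k-1) - xbar‖ ^ 2 ≤ (3*M*D) ^ 2 :=
            pow_le_pow_left₀ (norm_nonneg _) hq2 2
          have b0 : |a₀| * ‖g (x (k-3)) - g xbar - L (x (k-3) - xbar)‖ ≤ M * (κh * (3*M*D) ^ 2) :=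
            le_trans (mul_le_mul ha₀M he0 (norm_nonneg _) hM.le)
              (mul_le_mul_of_nonneg_left (mul_le_mul_of_nonneg_left k0 hκh.le) hM.le)
          have b1 : |a₁| * ‖g (x (k-2)) - g xbar - L (x (k-2) - xbar)‖ ≤ M * (κh * (3*M*D) ^ 2) :=
            le_trans (mul_le_mul ha₁M he1 (norm_nonneg _) hM.le)
              (mul_le_mul_of_nonneg_left (mul_le_mul_of_nonneg_left k1 hκh.le) hM.le)
          have b2 : |a₂| * ‖g (x (k-1)) - g xbar - L (x (k-1) - xbar)‖ ≤ M * (κh * (3*M*D) ^ 2) :=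
            le_trans (mul_le_mul ha₂M he2 (norm_nonneg _) hM.le)
              (mul_le_mul_of_nonneg_left (mul_le_mul_of_nonneg_left k2 hκh.le) hM.le)
          linarith
      _ = 27 * M ^ 3 * κh * D ^ 2 := by ring
  -- first-order terms
  have hbr : ‖b • r‖ = b * ‖r‖ := by
    rw [norm_smul, Real.norm_eq_abs, abs_of_pos hb0]
  have hT2 : ‖L (b • r)‖ ≤ κ * (b * ‖r‖) := by
    have := hg1 xbar (b • r); rwa [← hLdef, hbr] at this
  have hT1 : ‖(1-b) • r‖ = (1-b) * ‖r‖ := by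
    rw [norm_smul, Real.norm_eq_abs, abs_of_nonneg (by linarith)]
  -- assemble
  have hmain : ‖w (k+1)‖ ≤ ((1-b) + κ * b) * ‖r‖ + κh * ‖r‖ ^ 2
      + 27 * M ^ 3 * κh * D ^ 2 := by
    have hT3' : ‖T3‖ ≤ κh * ‖r‖ ^ 2 := by
      rw [hbr] at hT3
      have hb2 : (b * ‖r‖) ^ 2 ≤ ‖r‖ ^ 2 := by
        have h1 : (b * ‖r‖) ^ 2 = b ^ 2 * ‖r‖ ^ 2 := by ring
        have h2 : b ^ 2 ≤ 1 := by nlinarith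
        calc (b * ‖r‖) ^ 2 = b ^ 2 * ‖r‖ ^ 2 := h1
          _ ≤ 1 * ‖r‖ ^ 2 := mul_le_mul_of_nonneg_right h2 (sq_nonneg _)
          _ = ‖r‖ ^ 2 := one_mul _
      calc ‖T3‖ ≤ κh * (b * ‖r‖) ^ 2 := hT3
        _ ≤ κh * ‖r‖ ^ 2 := mul_le_mul_of_nonneg_left hb2 hκh.le
    calc ‖w (k+1)‖ = ‖(1-b) • r + L (b • r) + T3 + T4‖ := by rw [hdecomp]
      _ ≤ ‖(1-b) • r + L (b • r) + T3‖ + ‖T4‖ := norm_add_le _ _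
      _ ≤ ‖(1-b) • r‖ + ‖L (b • r)‖ + ‖T3‖ + ‖T4‖ := by
          have h1 : ‖(1-b) • r + L (b • r) + T3‖ ≤ ‖(1-b) • r + L (b • r)‖ + ‖T3‖ :=
            norm_add_le _ _
          have h2 : ‖(1-b) • r + L (b • r)‖ ≤ ‖(1-b) • r‖ + ‖L (b • r)‖ := norm_add_le _ _
          linarith
      _ ≤ ((1-b) + κ * b) * ‖r‖ + κh * ‖r‖ ^ 2 + 27 * M ^ 3 * κh * D ^ 2 := by
          rw [hT1]
          have hring : (1-b) * ‖r‖ + κ * (b * ‖r‖) = ((1-b) + κ * b) * ‖r‖ := by ring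
          linarith [hT2, hT3', hT4]
  -- bound D² by residuals
  have hD2 : D ^ 2 ≤ 6 * (‖w k‖ ^ 2 + ‖w (k-1)‖ ^ 2 + ‖w (k-2)‖ ^ 2) / (1 - κ) ^ 2 := by
    have hDle : (1 - κ) * D ≤ ‖w k‖ + 2 * ‖w (k-1)‖ + ‖w (k-2)‖ := by
      have h1 : (1 - κ) * ‖x (k-1) - x (k-2)‖ ≤ ‖w k‖ + ‖w (k-1)‖ := by
        rw [← le_div_iff₀' h1κ]; exact hd1
      have h2 : (1 - κ) * ‖x (k-2) - x (k-3)‖ ≤ ‖w (k-1)‖ + ‖w (k-2)‖ := by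
        rw [← le_div_iff₀' h1κ]; exact hd2
      rw [hDdef]; linarith
    rw [le_div_iff₀ (by positivity)]
    calc D ^ 2 * (1-κ) ^ 2 = ((1-κ) * D) ^ 2 := by ring
      _ ≤ (‖w k‖ + 2 * ‖w (k-1)‖ + ‖w (k-2)‖) ^ 2 :=
          pow_le_pow_left₀ (mul_nonneg h1κ.le hD0) hDle 2
      _ ≤ 6 * (‖w k‖ ^ 2 + ‖w (k-1)‖ ^ 2 + ‖w (k-2)‖ ^ 2) :=
          aux_sq6 ‖w k‖ ‖w (k-1)‖ ‖w (k-2)‖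
  -- final
  rw [hgoalsum]
  have hwk0 : ‖w k‖ ≠ 0 := norm_ne_zero_iff.mpr (hwne k)
  have hfirst : ‖r‖ / ‖w k‖ * ((1-b) + κ * b) * ‖w k‖ = ((1-b) + κ * b) * ‖r‖ := by
    field_simp
  rw [hfirst]
  have hlast : 27 * M ^ 3 * κh * D ^ 2 ≤
      162 * M ^ 3 * κh / (1 - κ) ^ 2 * (‖w k‖ ^ 2 + ‖w (k-1)‖ ^ 2 + ‖w (k-2)‖ ^ 2) := by
    have := mul_le_mul_of_nonneg_left hD2 (by positivity : (0:ℝ) ≤ 27 * M ^ 3 * κh)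
    calc 27 * M ^ 3 * κh * D ^ 2
        ≤ 27 * M ^ 3 * κh * (6 * (‖w k‖ ^ 2 + ‖w (k-1)‖ ^ 2 + ‖w (k-2)‖ ^ 2) / (1 - κ) ^ 2) :=
          this
      _ = 162 * M ^ 3 * κh / (1 - κ) ^ 2 * (‖w k‖ ^ 2 + ‖w (k-1)‖ ^ 2 + ‖w (k-2)‖ ^ 2) := by
          field_simp; ring
  have hr2 : κh * ‖r‖ ^ 2 ≤ κh * (‖w k‖ ^ 2 + ‖w (k-1)‖ ^ 2 + ‖w (k-2)‖ ^ 2) := by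
    have h1 : ‖r‖ ^ 2 ≤ ‖w k‖ ^ 2 := pow_le_pow_left₀ (norm_nonneg r) hropt 2
    have h2 : ‖r‖ ^ 2 ≤ ‖w k‖ ^ 2 + ‖w (k-1)‖ ^ 2 + ‖w (k-2)‖ ^ 2 := by
      have := sq_nonneg ‖w (k-1)‖
      have := sq_nonneg ‖w (k-2)‖
      linarith
    exact mul_le_mul_of_nonneg_left h2 hκh.le
  calc ‖w (k+1)‖ ≤ ((1-b) + κ * b) * ‖r‖ + κh * ‖r‖ ^ 2 + 27 * M ^ 3 * κh * D ^ 2 := hmain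
    _ ≤ ((1-b) + κ * b) * ‖r‖
        + (κh + 162 * M ^ 3 * κh / (1 - κ) ^ 2) * (‖w k‖ ^ 2 + ‖w (k-1)‖ ^ 2 + ‖w (k-2)‖ ^ 2) := by
        have hring : (κh + 162 * M ^ 3 * κh / (1 - κ) ^ 2)
            * (‖w k‖ ^ 2 + ‖w (k-1)‖ ^ 2 + ‖w (k-2)‖ ^ 2)
          = κh * (‖w k‖ ^ 2 + ‖w (k-1)‖ ^ 2 + ‖w (k-2)‖ ^ 2)
            + 162 * M ^ 3 * κh / (1 - κ) ^ 2 * (‖w k‖ ^ 2 + ‖w (k-1)‖ ^ 2 + ‖w (k-2)‖ ^ 2) := by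
          ring
        linarith [hr2, hlast]
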